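/- arXiv:2210.02039 — 4 statements merged into one kernel-verified Lean document; each statement's English description precedes it below -/
import Mathlib

section
/- Define Φ : ℝ × (0,1) → ℝ⁴ by Φ(s,t) = (s, (2t−1)(s²−1), −2s/√(t(1−t)), (2t−1)/√(t(1−t))) and f : ℝ × (0,1) → ℝ by f(s,t) = −4(s²−1)√(t(1−t)). Then Φ is injective and is an exact Lagrangian parametrization with primitive f; explicitly, for all s ∈ ℝ and t ∈ (0,1): (−2s/√(t(1−t)))·1 + ((2t−1)/√(t(1−t)))·(2t−1)·2s = ∂f/∂s(s,t) and ((2t−1)/√(t(1−t)))·2(s²−1) = ∂f/∂t(s,t). -/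
/-- Local model of the Lagrangian filling in the vertex reduction move:
`Φ(s,t) = (s, (2t−1)(s²−1), −2s/√(t(1−t)), (2t−1)/√(t(1−t)))` is injective on
`ℝ × (0,1)` and is an exact Lagrangian parametrization with primitive
`f(s,t) = −4(s²−1)√(t(1−t))`. -/
theorem stmt_1 :
    Set.InjOn (fun p : ℝ × ℝ =>
        (p.1, (2 * p.2 - 1) * (p.1 ^ 2 - 1),
          -2 * p.1 / Real.sqrt (p.2 * (1 - p.2)),
          (2 * p.2 - 1) / Real.sqrt (p.2 * (1 - p.2))))
      (Set.univ ×ˢ Set.Ioo (0 : ℝ) 1) ∧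
    ∀ s t : ℝ, t ∈ Set.Ioo (0 : ℝ) 1 →
      ((-2 * s / Real.sqrt (t * (1 - t))) * 1
          + ((2 * t - 1) / Real.sqrt (t * (1 - t))) * ((2 * t - 1) * (2 * s))
          = deriv (fun s' : ℝ => -4 * (s' ^ 2 - 1) * Real.sqrt (t * (1 - t))) s) ∧
      (((2 * t - 1) / Real.sqrt (t * (1 - t))) * (2 * (s ^ 2 - 1))
          = deriv (fun t' : ℝ => -4 * (s ^ 2 - 1) * Real.sqrt (t' * (1 - t'))) t) := by
  constructor
  · rintro ⟨s, t⟩ ⟨-, ht0, ht1⟩ ⟨s', t'⟩ ⟨-, ht0', ht1'⟩ h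
    simp only [Prod.mk.injEq] at h
    obtain ⟨h1, h2, h3, h4⟩ := h
    subst h1
    have hpos : (0:ℝ) < t * (1 - t) := by nlinarith
    have hpos' : (0:ℝ) < t' * (1 - t') := by nlinarith
    have hc : Real.sqrt (t * (1 - t)) > 0 := Real.sqrt_pos.mpr hpos
    have hc' : Real.sqrt (t' * (1 - t')) > 0 := Real.sqrt_pos.mpr hpos'
    have hsq : Real.sqrt (t * (1 - t)) ^ 2 = t * (1 - t) := Real.sq_sqrt hpos.le
    have hsq' : Real.sqrt (t' * (1 - t')) ^ 2 = t' * (1 - t') := Real.sq_sqrt hpos'.le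
    -- cross-multiplied form of h4
    set c := Real.sqrt (t * (1 - t)) with hcd
    set c' := Real.sqrt (t' * (1 - t')) with hcd'
    have h4' : (2 * t - 1) * c' = (2 * t' - 1) * c := by
      field_simp at h4
      linarith [h4]
    have hcc : c = c' := by
      have hsqeq : c ^ 2 = c' ^ 2 := by
        have := congrArg (fun x => x ^ 2) h4'
        simp only [mul_pow] at this
        rw [hsq, hsq'] at this
        nlinarith [this, hsq, hsq']
      nlinarith [hsqeq, hc, hc']
    have ht : t = t' := by
      rw [hcc] at h4'
      have := mul_right_cancel₀ (ne_of_gt hc') h4'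
      linarith
    simp [ht]
  · intro s t ⟨ht0, ht1⟩
    have hpos : (0:ℝ) < t * (1 - t) := by nlinarith
    have hc : Real.sqrt (t * (1 - t)) > 0 := Real.sqrt_pos.mpr hpos
    have hne : Real.sqrt (t * (1 - t)) ≠ 0 := ne_of_gt hc
    have hsq : Real.sqrt (t * (1 - t)) ^ 2 = t * (1 - t) := Real.sq_sqrt hpos.le
    constructor
    · have hd : HasDerivAt (fun s' : ℝ => -4 * (s' ^ 2 - 1) * Real.sqrt (t * (1 - t)))
          ((-4 * (2 * s)) * Real.sqrt (t * (1 - t))) s := by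
        have h1 : HasDerivAt (fun s' : ℝ => -4 * (s' ^ 2 - 1)) (-4 * (2 * s)) s := by
          have := ((hasDerivAt_pow 2 s).sub_const 1).const_mul (-4 : ℝ)
          simpa using this
        exact h1.mul_const _
      rw [hd.deriv]
      set c := Real.sqrt (t * (1 - t)) with hcd
      field_simp
      linear_combination (4 * s) * hsq
    · have hinner : HasDerivAt (fun t' : ℝ => t' * (1 - t')) (1 - 2 * t) t := by
        have := (hasDerivAt_id' t).mul ((hasDerivAt_const t (1:ℝ)).sub (hasDerivAt_id' t))
        exact this.congr_deriv (by simp only [Pi.sub_apply]; ring)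
      have hsqrt : HasDerivAt (fun t' : ℝ => Real.sqrt (t' * (1 - t')))
          ((1 / (2 * Real.sqrt (t * (1 - t)))) * (1 - 2 * t)) t :=
        (Real.hasDerivAt_sqrt (ne_of_gt hpos)).comp t hinner
      have hd : HasDerivAt (fun t' : ℝ => -4 * (s ^ 2 - 1) * Real.sqrt (t' * (1 - t')))
          (-4 * (s ^ 2 - 1) * ((1 / (2 * Real.sqrt (t * (1 - t)))) * (1 - 2 * t))) t := by
        have := hsqrt.const_mul (-4 * (s ^ 2 - 1) : ℝ)
        simpa [mul_assoc] using this
      rw [hd.deriv]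
      set c := Real.sqrt (t * (1 - t)) with hcd
      field_simp
      ring
end

section
/- Define Φ : ℝ² → ℝ⁴ by Φ(r,θ) = (r²sin(3θ/2)cos(θ/2), r²sin(3θ/2)sin(θ/2), −r·sinθ, −r·cosθ) and f : ℝ² → ℝ by f(r,θ) = −(2/3)r³sin²(3θ/2). Then for all (r,θ) ∈ ℝ²: (−r·sinθ)·∂ᵣ(r²sin(3θ/2)cos(θ/2)) + (−r·cosθ)·∂ᵣ(r²sin(3θ/2)sin(θ/2)) = ∂f/∂r(r,θ) and (−r·sinθ)·∂_θ(r²sin(3θ/2)cos(θ/2)) + (−r·cosθ)·∂_θ(r²sin(3θ/2)sin(θ/2)) = ∂f/∂θ(r,θ); moreover the restriction of Φ to (0,∞) × [0,2π) is injective. -/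
open Real

lemma angle_inj {θ ψ : ℝ} (hθ : θ ∈ Set.Ico 0 (2*π)) (hψ : ψ ∈ Set.Ico 0 (2*π))
    (hc : Real.cos θ = Real.cos ψ) (hs : Real.sin θ = Real.sin ψ) : θ = ψ := by
  have h := Real.Angle.cos_sin_inj hc hs
  rw [Real.Angle.angle_eq_iff_two_pi_dvd_sub] at h
  obtain ⟨k, hk⟩ := h
  have hπ := Real.pi_pos
  have habs : -(2*π) < 2 * π * (k:ℝ) ∧ 2 * π * (k:ℝ) < 2 * π := by
    constructor <;> nlinarith [hθ.1, hθ.2, hψ.1, hψ.2]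
  have hk0 : k = 0 := by
    rcases lt_trichotomy k 0 with h | h | h
    · have hk1 : (k : ℝ) ≤ -1 := by exact_mod_cast Int.le_sub_one_of_lt h
      nlinarith [habs.1]
    · exact h
    · have hk1 : (1 : ℝ) ≤ k := by exact_mod_cast h
      nlinarith [habs.2]
  rw [hk0] at hk; push_cast at hk; linarith

/-- The intermediate Lagrangian `L_{1/2}`:
`Φ(r,θ) = (r²sin(3θ/2)cos(θ/2), r²sin(3θ/2)sin(θ/2), −r·sinθ, −r·cosθ)` satisfies the
exact Lagrangian parametrization equations with primitive `f(r,θ) = −(2/3)r³sin²(3θ/2)`,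
and its restriction to `(0,∞) × [0,2π)` is injective. -/
theorem stmt_3 :
    (∀ r θ : ℝ,
      ((-(r * Real.sin θ))
            * deriv (fun r' : ℝ => r' ^ 2 * Real.sin (3 * θ / 2) * Real.cos (θ / 2)) r
          + (-(r * Real.cos θ))
            * deriv (fun r' : ℝ => r' ^ 2 * Real.sin (3 * θ / 2) * Real.sin (θ / 2)) r
          = deriv (fun r' : ℝ => -(2 / 3) * r' ^ 3 * Real.sin (3 * θ / 2) ^ 2) r) ∧
      ((-(r * Real.sin θ))
            * deriv (fun θ' : ℝ => r ^ 2 * Real.sin (3 * θ' / 2) * Real.cos (θ' / 2)) θ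
          + (-(r * Real.cos θ))
            * deriv (fun θ' : ℝ => r ^ 2 * Real.sin (3 * θ' / 2) * Real.sin (θ' / 2)) θ
          = deriv (fun θ' : ℝ => -(2 / 3) * r ^ 3 * Real.sin (3 * θ' / 2) ^ 2) θ)) ∧
    Set.InjOn (fun p : ℝ × ℝ =>
        (p.1 ^ 2 * Real.sin (3 * p.2 / 2) * Real.cos (p.2 / 2),
          p.1 ^ 2 * Real.sin (3 * p.2 / 2) * Real.sin (p.2 / 2),
          -(p.1 * Real.sin p.2), -(p.1 * Real.cos p.2)))
      (Set.Ioi (0 : ℝ) ×ˢ Set.Ico (0 : ℝ) (2 * Real.pi)) := by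
  constructor
  · intro r θ
    -- common trig identities
    have h3 : (3 : ℝ) * θ / 2 = θ + θ / 2 := by ring
    have hθ2 : θ = θ / 2 + θ / 2 := by ring
    have hS3 : Real.sin (3 * θ / 2)
        = Real.sin θ * Real.cos (θ/2) + Real.cos θ * Real.sin (θ/2) := by
      rw [h3, Real.sin_add]
    have hC3 : Real.cos (3 * θ / 2)
        = Real.cos θ * Real.cos (θ/2) - Real.sin θ * Real.sin (θ/2) := by
      rw [h3, Real.cos_add]
    constructor
    · -- r-derivatives
      have d1 : deriv (fun r' : ℝ => r' ^ 2 * Real.sin (3 * θ / 2) * Real.cos (θ / 2)) r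
          = 2 * r * Real.sin (3 * θ / 2) * Real.cos (θ / 2) := by
        have : HasDerivAt (fun r' : ℝ => r' ^ 2 * Real.sin (3 * θ / 2) * Real.cos (θ / 2))
            (2 * r * Real.sin (3 * θ / 2) * Real.cos (θ / 2)) r := by
          have := ((hasDerivAt_pow 2 r).mul_const (Real.sin (3 * θ / 2))).mul_const
            (Real.cos (θ / 2))
          simpa [mul_comm, mul_assoc, mul_left_comm] using this
        exact this.deriv
      have d2 : deriv (fun r' : ℝ => r' ^ 2 * Real.sin (3 * θ / 2) * Real.sin (θ / 2)) r
          = 2 * r * Real.sin (3 * θ / 2) * Real.sin (θ / 2) := by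
        have : HasDerivAt (fun r' : ℝ => r' ^ 2 * Real.sin (3 * θ / 2) * Real.sin (θ / 2))
            (2 * r * Real.sin (3 * θ / 2) * Real.sin (θ / 2)) r := by
          have := ((hasDerivAt_pow 2 r).mul_const (Real.sin (3 * θ / 2))).mul_const
            (Real.sin (θ / 2))
          simpa [mul_comm, mul_assoc, mul_left_comm] using this
        exact this.deriv
      have d3 : deriv (fun r' : ℝ => -(2 / 3) * r' ^ 3 * Real.sin (3 * θ / 2) ^ 2) r
          = -(2/3) * (3 * r ^ 2) * Real.sin (3 * θ / 2) ^ 2 := by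
        have : HasDerivAt (fun r' : ℝ => -(2 / 3) * r' ^ 3 * Real.sin (3 * θ / 2) ^ 2)
            (-(2/3) * (3 * r ^ 2) * Real.sin (3 * θ / 2) ^ 2) r := by
          have := (((hasDerivAt_pow 3 r).const_mul (-(2/3) : ℝ)).mul_const
            (Real.sin (3 * θ / 2) ^ 2))
          simpa [mul_comm, mul_assoc, mul_left_comm] using this
        exact this.deriv
      rw [d1, d2, d3, hS3]; ring
    · -- θ-derivatives
      have hlin : ∀ x : ℝ, HasDerivAt (fun t : ℝ => 3 * t / 2) (3/2 : ℝ) x := by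
        intro x
        simpa using ((hasDerivAt_id x).const_mul (3 : ℝ)).div_const 2
      have hlin2 : ∀ x : ℝ, HasDerivAt (fun t : ℝ => t / 2) (1/2 : ℝ) x := by
        intro x
        simpa using (hasDerivAt_id x).div_const 2
      have hS : HasDerivAt (fun t : ℝ => Real.sin (3 * t / 2))
          (Real.cos (3 * θ / 2) * (3/2)) θ :=
        HasDerivAt.comp θ (h := fun t : ℝ => 3 * t / 2) (Real.hasDerivAt_sin (3 * θ / 2)) (hlin θ)
      have hC : HasDerivAt (fun t : ℝ => Real.cos (t / 2))
          (-Real.sin (θ / 2) * (1/2)) θ :=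
        HasDerivAt.comp θ (h := fun t : ℝ => t / 2) (Real.hasDerivAt_cos (θ / 2)) (hlin2 θ)
      have hS2 : HasDerivAt (fun t : ℝ => Real.sin (t / 2))
          (Real.cos (θ / 2) * (1/2)) θ :=
        HasDerivAt.comp θ (h := fun t : ℝ => t / 2) (Real.hasDerivAt_sin (θ / 2)) (hlin2 θ)
      have d1 : deriv (fun θ' : ℝ => r ^ 2 * Real.sin (3 * θ' / 2) * Real.cos (θ' / 2)) θ
          = r ^ 2 * ((Real.cos (3 * θ / 2) * (3/2)) * Real.cos (θ / 2)
              + Real.sin (3 * θ / 2) * (-Real.sin (θ / 2) * (1/2))) := by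
        have : HasDerivAt (fun θ' : ℝ => r ^ 2 * Real.sin (3 * θ' / 2) * Real.cos (θ' / 2))
            (r ^ 2 * ((Real.cos (3 * θ / 2) * (3/2)) * Real.cos (θ / 2)
              + Real.sin (3 * θ / 2) * (-Real.sin (θ / 2) * (1/2)))) θ := by
          have := ((hS.const_mul (r ^ 2)).fun_mul hC)
          refine this.congr_deriv ?_; ring
        exact this.deriv
      have d2 : deriv (fun θ' : ℝ => r ^ 2 * Real.sin (3 * θ' / 2) * Real.sin (θ' / 2)) θ
          = r ^ 2 * ((Real.cos (3 * θ / 2) * (3/2)) * Real.sin (θ / 2)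
              + Real.sin (3 * θ / 2) * (Real.cos (θ / 2) * (1/2))) := by
        have : HasDerivAt (fun θ' : ℝ => r ^ 2 * Real.sin (3 * θ' / 2) * Real.sin (θ' / 2))
            (r ^ 2 * ((Real.cos (3 * θ / 2) * (3/2)) * Real.sin (θ / 2)
              + Real.sin (3 * θ / 2) * (Real.cos (θ / 2) * (1/2)))) θ := by
          have := ((hS.const_mul (r ^ 2)).fun_mul hS2)
          refine this.congr_deriv ?_; ring
        exact this.deriv
      have d3 : deriv (fun θ' : ℝ => -(2 / 3) * r ^ 3 * Real.sin (3 * θ' / 2) ^ 2) θ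
          = -(2/3) * r ^ 3 * (2 * Real.sin (3 * θ / 2) * (Real.cos (3 * θ / 2) * (3/2))) := by
        have : HasDerivAt (fun θ' : ℝ => -(2 / 3) * r ^ 3 * Real.sin (3 * θ' / 2) ^ 2)
            (-(2/3) * r ^ 3 * (2 * Real.sin (3 * θ / 2) * (Real.cos (3 * θ / 2) * (3/2)))) θ := by
          have hsq : HasDerivAt (fun t : ℝ => Real.sin (3 * t / 2) ^ 2)
              (2 * Real.sin (3 * θ / 2) * (Real.cos (3 * θ / 2) * (3/2))) θ := by
            have := hS.fun_pow 2
            refine this.congr_deriv ?_; ring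
          have := hsq.const_mul (-(2/3) * r ^ 3 : ℝ)
          convert this using 2
        exact this.deriv
      rw [d1, d2, d3, hS3, hC3]; ring
  · -- injectivity
    rintro ⟨r, θ⟩ ⟨hr, hθ⟩ ⟨s, ψ⟩ ⟨hs, hψ⟩ heq
    simp only [Prod.mk.injEq] at heq
    obtain ⟨_, _, h3, h4⟩ := heq
    have h3' : r * Real.sin θ = s * Real.sin ψ := by linarith
    have h4' : r * Real.cos θ = s * Real.cos ψ := by linarith
    have hr0 : (0:ℝ) < r := hr
    have hs0 : (0:ℝ) < s := hs
    have hrs : r = s := by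
      have e1 : (r * Real.sin θ)^2 = (s * Real.sin ψ)^2 := by rw [h3']
      have e2 : (r * Real.cos θ)^2 = (s * Real.cos ψ)^2 := by rw [h4']
      have h2 : r ^ 2 = s ^ 2 := by
        nlinarith [e1, e2, Real.sin_sq_add_cos_sq θ, Real.sin_sq_add_cos_sq ψ]
      rcases lt_trichotomy r s with h | h | h
      · nlinarith
      · exact h
      · nlinarith
    subst hrs
    have hsin : Real.sin θ = Real.sin ψ := by
      exact mul_left_cancel₀ (ne_of_gt hr0) h3'
    have hcos : Real.cos θ = Real.cos ψ := by
      exact mul_left_cancel₀ (ne_of_gt hr0) h4'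
    have hθψ : θ = ψ := angle_inj hθ hψ hcos hsin
    simp [hθψ]
end

section
/- Let r > 0 and u = √(1 + 2/r²), and let θ ∈ ℝ satisfy cosθ = −u/2. Then: r²·sin(3θ/2)·cos(θ/2) + (1/2)·r²(u−1)·sinθ = 0 and r²·sin(3θ/2)·sin(θ/2) + (1/2)·r²(u−1)·cosθ = −1. Moreover, if r² > 2/3 then a real θ with cosθ = −u/2 exists. -/
/-- For `r > 0`, `u = √(1 + 2/r²)` and any `θ` with `cos θ = −u/2`, the crossing of the
projected level curve of `L₀ = φ_{H₋}^{−1/2}(L_{1/2})` lies at the point `(0, −1)`;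
moreover such a `θ` exists whenever `r² > 2/3`. -/
theorem stmt_5 (r : ℝ) (hr : 0 < r) :
    (∀ θ : ℝ, Real.cos θ = -(Real.sqrt (1 + 2 / r ^ 2)) / 2 →
      (r ^ 2 * Real.sin (3 * θ / 2) * Real.cos (θ / 2)
          + (1 / 2) * (r ^ 2 * (Real.sqrt (1 + 2 / r ^ 2) - 1)) * Real.sin θ = 0 ∧
        r ^ 2 * Real.sin (3 * θ / 2) * Real.sin (θ / 2)
          + (1 / 2) * (r ^ 2 * (Real.sqrt (1 + 2 / r ^ 2) - 1)) * Real.cos θ = -1)) ∧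
    (2 / 3 < r ^ 2 → ∃ θ : ℝ, Real.cos θ = -(Real.sqrt (1 + 2 / r ^ 2)) / 2) := by
  have hr2 : (0:ℝ) < r ^ 2 := by positivity
  set u := Real.sqrt (1 + 2 / r ^ 2) with hu
  have hupos : 0 ≤ u := Real.sqrt_nonneg _
  have hu2 : u ^ 2 = 1 + 2 / r ^ 2 := Real.sq_sqrt (by positivity)
  have hru : r ^ 2 * (u ^ 2 - 1) = 2 := by
    rw [hu2]; field_simp; ring
  constructor
  · intro θ hθ
    set s := Real.sin (θ / 2) with hs
    set c := Real.cos (θ / 2) with hc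
    have hsc : s ^ 2 + c ^ 2 = 1 := Real.sin_sq_add_cos_sq _
    have hsin : Real.sin θ = 2 * s * c := by
      have := Real.sin_two_mul (θ / 2)
      rw [show 2 * (θ / 2) = θ by ring] at this
      simpa [hs, hc] using this
    have hcos : Real.cos θ = 2 * c ^ 2 - 1 := by
      have := Real.cos_two_mul (θ / 2)
      rw [show 2 * (θ / 2) = θ by ring] at this
      simpa [hc] using this
    have hsin3 : Real.sin (3 * θ / 2) = s * Real.cos θ + c * Real.sin θ := by
      have := Real.sin_add (θ / 2) θ
      rw [show θ / 2 + θ = 3 * θ / 2 by ring] at this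
      simpa [hs, hc, mul_comm] using this
    have hc2 : 2 * c ^ 2 - 1 = -u / 2 := by rw [← hcos, hθ]
    constructor
    · rw [hsin3, hsin, hθ]
      linear_combination (r ^ 2 * s * c) * hc2
    · rw [hsin3, hsin, hθ]
      linear_combination (r ^ 2 * s ^ 2 - r ^ 2 * (1 - u) / 2) * hc2
        + r ^ 2 * (1 - u) * hsc - (1 / 2) * hru
  · intro h
    have h4 : Real.sqrt 4 = 2 := by
      rw [show (4:ℝ) = 2 ^ 2 by norm_num]; exact Real.sqrt_sq (by norm_num)
    have hle : u ≤ 2 := by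
      have hdiv : 2 / r ^ 2 ≤ 3 := by rw [div_le_iff₀ hr2]; nlinarith
      calc u ≤ Real.sqrt 4 := Real.sqrt_le_sqrt (by linarith)
        _ = 2 := h4
    refine ⟨Real.arccos (-u / 2), Real.cos_arccos ?_ ?_⟩ <;> nlinarith
end

section
/- Let R_θ : ℝ² → ℝ² denote rotation by angle θ, R_θ(x,y) = (x·cosθ − y·sinθ, x·sinθ + y·cosθ). For every θ, t ∈ ℝ, the map Ψ : ℝ × (0,∞) → ℝ⁴ whose base part is P(x,w) = R_θ(x, t − w − 1/2) and whose fiber part is Ξ(x,w) = R_θ(0, −1/w) is injective and is an exact Lagrangian parametrization with primitive f(x,w) = log w; explicitly, ⟨Ξ(x,w), ∂ₓP(x,w)⟩ = 0 and ⟨Ξ(x,w), ∂_wP(x,w)⟩ = 1/w for all (x,w) ∈ ℝ × (0,∞). -/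
/-- Rotation of the plane `ℝ²` by angle `θ`. -/
noncomputable def rot (θ : ℝ) (p : ℝ × ℝ) : ℝ × ℝ :=
  (p.1 * Real.cos θ - p.2 * Real.sin θ, p.1 * Real.sin θ + p.2 * Real.cos θ)

/-- Euclidean inner product on `ℝ × ℝ`. -/
def dotR2 (a b : ℝ × ℝ) : ℝ := a.1 * b.1 + a.2 * b.2

lemma rot_inj (θ : ℝ) {a b : ℝ × ℝ} (h : rot θ a = rot θ b) : a = b := by
  obtain ⟨a1, a2⟩ := a
  obtain ⟨b1, b2⟩ := b
  simp only [rot, Prod.mk.injEq] at h ⊢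
  obtain ⟨h1, h2⟩ := h
  have hpc := Real.sin_sq_add_cos_sq θ
  constructor
  · linear_combination Real.cos θ * h1 + Real.sin θ * h2 - (a1 - b1) * hpc
  · linear_combination -Real.sin θ * h1 + Real.cos θ * h2 - (a2 - b2) * hpc

lemma deriv1 (θ t w : ℝ) (x : ℝ) :
    deriv (fun x' : ℝ => rot θ (x', t - w - 1 / 2)) x = (Real.cos θ, Real.sin θ) := by
  have h : HasDerivAt (fun x' : ℝ => rot θ (x', t - w - 1 / 2))
      (Real.cos θ, Real.sin θ) x := by
    have h1 : HasDerivAt (fun x' : ℝ => x' * Real.cos θ - (t - w - 1 / 2) * Real.sin θ)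
        (Real.cos θ) x := by
      simpa using ((hasDerivAt_id x).mul_const (Real.cos θ)).sub_const ((t - w - 1 / 2) * Real.sin θ)
    have h2 : HasDerivAt (fun x' : ℝ => x' * Real.sin θ + (t - w - 1 / 2) * Real.cos θ)
        (Real.sin θ) x := by
      simpa using ((hasDerivAt_id x).mul_const (Real.sin θ)).add_const ((t - w - 1 / 2) * Real.cos θ)
    exact h1.prodMk h2
  exact h.deriv

lemma deriv2 (θ t x : ℝ) (w : ℝ) :
    deriv (fun w' : ℝ => rot θ (x, t - w' - 1 / 2)) w = (Real.sin θ, -Real.cos θ) := by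
  have h : HasDerivAt (fun w' : ℝ => rot θ (x, t - w' - 1 / 2))
      (Real.sin θ, -Real.cos θ) w := by
    have hc : HasDerivAt (fun w' : ℝ => t - w' - 1 / 2) (-1) w := by
      simpa using ((hasDerivAt_const w t).sub (hasDerivAt_id w)).sub_const (1 / 2 : ℝ)
    have h1 : HasDerivAt (fun w' : ℝ => x * Real.cos θ - (t - w' - 1 / 2) * Real.sin θ)
        (Real.sin θ) w := by
      simpa using (hasDerivAt_const w (x * Real.cos θ)).fun_sub (hc.mul_const (Real.sin θ))
    have h2 : HasDerivAt (fun w' : ℝ => x * Real.sin θ + (t - w' - 1 / 2) * Real.cos θ)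
        (-Real.cos θ) w := by
      simpa using (hasDerivAt_const w (x * Real.sin θ)).fun_add (hc.mul_const (Real.cos θ))
    exact h1.prodMk h2
  exact h.deriv

/-- Each rotated sheet of the hybrid Lagrangian in Reidemeister III move 2:
the map with base part `P(x,w) = R_θ(x, t − w − 1/2)` and fiber part
`Ξ(x,w) = R_θ(0, −1/w)` is injective on `ℝ × (0,∞)` and is an exact Lagrangian
parametrization with primitive `f(x,w) = log w`. -/
theorem stmt_7 (θ t : ℝ) :
    Set.InjOn (fun p : ℝ × ℝ =>
        (rot θ (p.1, t - p.2 - 1 / 2), rot θ (0, -1 / p.2)))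
      (Set.univ ×ˢ Set.Ioi (0 : ℝ)) ∧
    ∀ x w : ℝ, 0 < w →
      dotR2 (rot θ (0, -1 / w)) (deriv (fun x' : ℝ => rot θ (x', t - w - 1 / 2)) x) = 0 ∧
      dotR2 (rot θ (0, -1 / w)) (deriv (fun w' : ℝ => rot θ (x, t - w' - 1 / 2)) w) = 1 / w ∧
      deriv (fun w' : ℝ => Real.log w') w = 1 / w := by
  constructor
  · rintro ⟨x1, w1⟩ ⟨-, hw1⟩ ⟨x2, w2⟩ ⟨-, hw2⟩ h
    simp only [Prod.mk.injEq] at h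
    have h1 := rot_inj θ h.1
    simp only [Prod.mk.injEq] at h1
    exact Prod.ext h1.1 (by linarith [h1.2])
  · intro x w hw
    refine ⟨?_, ?_, ?_⟩
    · rw [deriv1]
      simp only [rot, dotR2]
      ring
    · rw [deriv2]
      simp only [rot, dotR2]
      linear_combination (1 / w) * Real.sin_sq_add_cos_sq θ
    · rw [Real.deriv_log, one_div]
end
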